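/- (Theorem 2.1, 'if' direction) Let G be a finite simple graph and k ≥ 1. If for every k-limited spanning subgraph M of G with σ(M) > 0 there exists an M-augmenting trail in G, then G has a k-factor. -/

import Mathlib

open SimpleGraph

variable {V : Type*}

/-- The degree of a vertex `v` in a (sub)graph `M`. -/
noncomputable def mdeg (M : SimpleGraph V) (v : V) : ℕ := (M.neighborSet v).ncard

/-- `M` is a `k`-limited spanning subgraph of `G`: a subgraph on all the vertices of `G`
with all degrees at most `k`. -/
def IsKLimitedSpanning (G M : SimpleGraph V) (k : ℕ) : Prop :=
  M ≤ G ∧ ∀ v : V, mdeg M v ≤ k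

/-- `F` is a `k`-factor of `G`: a spanning subgraph all of whose degrees equal `k`. -/
def IsKFactor (G F : SimpleGraph V) (k : ℕ) : Prop :=
  F ≤ G ∧ ∀ v : V, mdeg F v = k

/-- The deficiency `σ(M) = ∑_{v} (k - deg_M v)`. -/
noncomputable def sigmaDef [Fintype V] (M : SimpleGraph V) (k : ℕ) : ℕ :=
  ∑ v : V, (k - mdeg M v)

/-- An `M`-alternating trail: a trail whose consecutive edges alternate between
membership and non-membership in `E(M)`. -/
def IsAltTrail {G : SimpleGraph V} (M : SimpleGraph V) {u v : V} (p : G.Walk u v) : Prop :=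
  p.IsTrail ∧ ∀ (i : ℕ) (h : i + 1 < p.edges.length),
    ((p.edges[i]'(Nat.lt_of_succ_lt h)) ∈ M.edgeSet ↔ (p.edges[i+1]'h) ∉ M.edgeSet)

/-- An `M`-augmenting trail (with respect to the bound `k`): an `M`-alternating trail whose
first and last edges are not in `E(M)`, whose endpoints are unfilled in `M`, all of whose
inner vertex visits are filled in `M`, and which, if closed at `v₀ = u = v`, additionally
satisfies `deg_M v₀ < k - 1`. -/
def IsAugTrail (G M : SimpleGraph V) (k : ℕ) {u v : V} (p : G.Walk u v) : Prop :=
  IsAltTrail M p ∧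
  p.edges ≠ [] ∧
  (∀ e, p.edges.head? = some e → e ∉ M.edgeSet) ∧
  (∀ e, p.edges.getLast? = some e → e ∉ M.edgeSet) ∧
  mdeg M u < k ∧ mdeg M v < k ∧
  (∀ w ∈ p.support.tail.dropLast, mdeg M w = k) ∧
  (u = v → mdeg M u < k - 1)

open Classical in
noncomputable def wt (M : SimpleGraph V) (v : V) (e : Sym2 V) : ℤ :=
  if v ∈ e then (if e ∈ M.edgeSet then -1 else 1) else 0

noncomputable def Dsum (M : SimpleGraph V) {G : SimpleGraph V} {a b : V}
    (p : G.Walk a b) (v : V) : ℤ := (p.edges.map (wt M v)).sum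

def AltList (M : SimpleGraph V) (l : List (Sym2 V)) : Prop :=
  ∀ (i : ℕ) (h : i + 1 < l.length),
    ((l[i]'(Nat.lt_of_succ_lt h)) ∈ M.edgeSet ↔ (l[i+1]'h) ∉ M.edgeSet)

lemma AltList.tail {M : SimpleGraph V} {e : Sym2 V} {l : List (Sym2 V)}
    (hA : AltList M (e :: l)) : AltList M l := by
  intro i h
  have := hA (i+1) (by simpa using Nat.succ_lt_succ h)
  simpa using this

lemma AltList.head_link {M : SimpleGraph V} {e : Sym2 V} {l : List (Sym2 V)}
    (hA : AltList M (e :: l)) (hl : l ≠ []) :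
    (e ∈ M.edgeSet ↔ l.head hl ∉ M.edgeSet) := by
  have h1 : 0 + 1 < (e :: l).length := by
    simp [List.length_cons]
    exact List.length_pos_iff.mpr hl
  have := hA 0 h1
  simpa [List.getElem_cons_zero, List.getElem_cons_succ, List.head_eq_getElem] using this

lemma head_edge_mem {G : SimpleGraph V} {a b : V} (p : G.Walk a b) (h : p.edges ≠ []) :
    a ∈ p.edges.head h := by
  cases p with
  | nil => simp at h
  | cons h' q => simp [Walk.edges_cons]

lemma getLast_edge_mem {G : SimpleGraph V} {a b : V} (p : G.Walk a b) (h : p.edges ≠ []) :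
    b ∈ p.edges.getLast h := by
  induction p with
  | nil => simp at h
  | cons h' q ih =>
    rename_i a c b
    by_cases hq : q.edges = []
    · have hcb : c = b := Walk.eq_of_length_eq_zero (by
        have := Walk.length_edges q
        rw [hq] at this
        simpa using this.symm)
      subst hcb
      simp [Walk.edges_cons, hq]
    · simp only [Walk.edges_cons]
      rw [List.getLast_cons hq]
      exact ih hq

open Classical in
lemma Dsum_eq {G M : SimpleGraph V} {a b : V} (p : G.Walk a b)
    (halt : AltList M p.edges) (hne : p.edges ≠ []) (v : V) :
    Dsum M p v = (if v = a then wt M v (p.edges.head hne) else 0)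
               + (if v = b then wt M v (p.edges.getLast hne) else 0) := by
  induction p with
  | nil => simp at hne
  | cons h' q ih =>
    rename_i a c b
    by_cases hq : q.edges = []
    · have hcb : c = b := Walk.eq_of_length_eq_zero (by
        have := Walk.length_edges q
        rw [hq] at this
        simpa using this.symm)
      subst hcb
      have hD : Dsum M (Walk.cons h' q) v = wt M v s(a, c) := by
        simp [Dsum, Walk.edges_cons, hq]
      have hhead : (Walk.cons h' q).edges.head hne = s(a, c) := by
        simp [Walk.edges_cons]
      have hlast : (Walk.cons h' q).edges.getLast hne = s(a, c) := by
        simp [Walk.edges_cons, hq]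
      rw [hD, hhead, hlast]
      have hac : a ≠ c := h'.ne
      rcases eq_or_ne v a with rfl | hva
      · simp [hac, wt]
      · rcases eq_or_ne v c with rfl | hvc
        · simp [hva, wt]
        · have hv : v ∉ s(a, c) := by
            rw [Sym2.mem_iff]; push_neg; exact ⟨hva, hvc⟩
          simp [hva, hvc, wt, hv]
    · have halt' : AltList M q.edges := by
        have : (Walk.cons h' q).edges = s(a,c) :: q.edges := Walk.edges_cons h' q
        exact AltList.tail (this ▸ halt)
      have hD : Dsum M (Walk.cons h' q) v = wt M v s(a, c) + Dsum M q v := by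
        simp [Dsum, Walk.edges_cons]
      have hhead : (Walk.cons h' q).edges.head hne = s(a, c) := by
        simp [Walk.edges_cons]
      have hlast : (Walk.cons h' q).edges.getLast hne = q.edges.getLast hq := by
        simp only [Walk.edges_cons]
        rw [List.getLast_cons hq]
      have hlink : (s(a,c) ∈ M.edgeSet ↔ q.edges.head hq ∉ M.edgeSet) := by
        have : (Walk.cons h' q).edges = s(a,c) :: q.edges := Walk.edges_cons h' q
        exact AltList.head_link (this ▸ halt) hq
      rw [hD, ih halt' hq, hhead, hlast]
      have hac : a ≠ c := h'.ne
      have key : wt M v s(a,c) + (if v = c then wt M v (q.edges.head hq) else 0)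
          = (if v = a then wt M v s(a,c) else 0) := by
        rcases eq_or_ne v a with rfl | hva
        · simp [hac]
        · rcases eq_or_ne v c with rfl | hvc
          · have h1 : v ∈ s(a, v) := Sym2.mem_mk_right a v
            have h2 : v ∈ q.edges.head hq := head_edge_mem q hq
            simp only [hva, if_neg hva, if_pos rfl, wt, if_pos h1, if_pos h2]
            by_cases hm : s(a, v) ∈ M.edgeSet
            · rw [if_pos hm, if_neg (hlink.mp hm)]; simp
            · rw [if_neg hm]
              have : q.edges.head hq ∈ M.edgeSet := by
                by_contra hcon
                exact hm (hlink.mpr hcon)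
              rw [if_pos this]; simp
          · have hv : v ∉ s(a, c) := by
              rw [Sym2.mem_iff]; push_neg; exact ⟨hva, hvc⟩
            simp [hva, hvc, wt, hv]
      linarith [key]

open Classical in
lemma mdeg_aug [Fintype V] {G M : SimpleGraph V} {a b : V} {p : G.Walk a b}
    (ht : p.IsTrail) (v : V) :
    (mdeg (fromEdgeSet (symmDiff M.edgeSet {e | e ∈ p.edges})) v : ℤ)
      = mdeg M v + Dsum M p v := by
  set M' := fromEdgeSet (symmDiff M.edgeSet {e | e ∈ p.edges}) with hM'
  have hedge : M'.edgeSet = symmDiff M.edgeSet {e | e ∈ p.edges} := by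
    rw [hM', edgeSet_fromEdgeSet]
    apply sdiff_eq_self_iff_disjoint.mpr
    rw [Set.disjoint_left]
    intro e hd he
    rw [Sym2.mem_diagSet] at hd
    rcases Set.mem_symmDiff.mp he with ⟨h1, -⟩ | ⟨h1, -⟩
    · exact M.not_isDiag_of_mem_edgeSet h1 hd
    · exact G.not_isDiag_of_mem_edgeSet (Walk.edges_subset_edgeSet p h1) hd
  set N := M.neighborSet v with hNdef
  set P := {w : V | s(v, w) ∈ p.edges} with hPdef
  have hN : M'.neighborSet v = symmDiff N P := by
    ext w
    simp only [mem_neighborSet, ← SimpleGraph.mem_edgeSet, hedge, Set.mem_symmDiff]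
    simp [hNdef, hPdef, SimpleGraph.mem_edgeSet]
  have h1 : (symmDiff N P).ncard = (N \ P).ncard + (P \ N).ncard := by
    rw [symmDiff_def]
    exact Set.ncard_union_eq disjoint_sdiff_sdiff (Set.toFinite _) (Set.toFinite _)
  have h2 : (N ∩ P).ncard + (N \ P).ncard = N.ncard :=
    Set.ncard_inter_add_ncard_diff_eq_ncard N P (Set.toFinite N)
  -- compute Dsum
  have hinj : ∀ (S : Set V), ((fun w => s(v, w)) '' S).ncard = S.ncard :=
    fun S => Set.ncard_image_of_injOn (fun x _ y _ hxy => Sym2.congr_right.mp hxy)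
  have himg2 : ((p.edges.toFinset.filter (fun e => v ∈ e ∧ e ∉ M.edgeSet)) : Set (Sym2 V))
      = (fun w => s(v, w)) '' (P \ N) := by
    ext e
    simp only [Finset.coe_filter, Set.mem_setOf_eq, List.mem_toFinset, Set.mem_image,
      Set.mem_diff, hPdef, hNdef, mem_neighborSet]
    constructor
    · rintro ⟨hel, hve, hem⟩
      obtain ⟨w, rfl⟩ := Sym2.mem_iff_exists.mp hve
      exact ⟨w, ⟨hel, fun hw => hem (M.mem_edgeSet.mpr hw)⟩, rfl⟩
    · rintro ⟨w, ⟨hwP, hwN⟩, rfl⟩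
      exact ⟨hwP, Sym2.mem_mk_left v w, fun hm => hwN (M.mem_edgeSet.mp hm)⟩
  have himg1 : ((p.edges.toFinset.filter (fun e => v ∈ e ∧ e ∈ M.edgeSet)) : Set (Sym2 V))
      = (fun w => s(v, w)) '' (P ∩ N) := by
    ext e
    simp only [Finset.coe_filter, Set.mem_setOf_eq, List.mem_toFinset, Set.mem_image,
      Set.mem_inter_iff, hPdef, hNdef, mem_neighborSet]
    constructor
    · rintro ⟨hel, hve, hem⟩
      obtain ⟨w, rfl⟩ := Sym2.mem_iff_exists.mp hve
      exact ⟨w, ⟨hel, M.mem_edgeSet.mp hem⟩, rfl⟩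
    · rintro ⟨w, ⟨hwP, hwN⟩, rfl⟩
      exact ⟨hwP, Sym2.mem_mk_left v w, M.mem_edgeSet.mpr hwN⟩
  have hcard2 : (p.edges.toFinset.filter (fun e => v ∈ e ∧ e ∉ M.edgeSet)).card
      = (P \ N).ncard := by
    rw [← Set.ncard_coe_finset, himg2, hinj]
  have hcard1 : (p.edges.toFinset.filter (fun e => v ∈ e ∧ e ∈ M.edgeSet)).card
      = (P ∩ N).ncard := by
    rw [← Set.ncard_coe_finset, himg1, hinj]
  have hD : Dsum M p v = ((P \ N).ncard : ℤ) - ((P ∩ N).ncard : ℤ) := by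
    have hs : Dsum M p v = ∑ e ∈ p.edges.toFinset, wt M v e :=
      (List.sum_toFinset _ ht.edges_nodup).symm
    have hsplit : ∀ e : Sym2 V, wt M v e
        = (if v ∈ e ∧ e ∉ M.edgeSet then (1:ℤ) else 0)
          - (if v ∈ e ∧ e ∈ M.edgeSet then (1:ℤ) else 0) := by
      intro e
      unfold wt
      by_cases hv : v ∈ e <;> by_cases hm : e ∈ M.edgeSet <;> simp [hv, hm]
    rw [hs]
    calc ∑ e ∈ p.edges.toFinset, wt M v e
        = ∑ e ∈ p.edges.toFinset, ((if v ∈ e ∧ e ∉ M.edgeSet then (1:ℤ) else 0)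
          - (if v ∈ e ∧ e ∈ M.edgeSet then (1:ℤ) else 0)) :=
          Finset.sum_congr rfl fun e _ => hsplit e
      _ = ((p.edges.toFinset.filter (fun e => v ∈ e ∧ e ∉ M.edgeSet)).card : ℤ)
          - ((p.edges.toFinset.filter (fun e => v ∈ e ∧ e ∈ M.edgeSet)).card : ℤ) := by
          rw [Finset.sum_sub_distrib, Finset.sum_boole, Finset.sum_boole]
      _ = ((P \ N).ncard : ℤ) - ((P ∩ N).ncard : ℤ) := by rw [hcard2, hcard1]
  have hdeg' : mdeg M' v = (N \ P).ncard + (P \ N).ncard := by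
    rw [mdeg, hN, h1]
  have hdegM : mdeg M v = (N ∩ P).ncard + (N \ P).ncard := by rw [mdeg, ← h2]
  have hcomm : (N ∩ P).ncard = (P ∩ N).ncard := by rw [Set.inter_comm]
  rw [hdeg', hdegM, hD, hcomm]
  push_cast
  ring

lemma edgeSet_aug' {G M : SimpleGraph V} {a b : V} (p : G.Walk a b) :
    (fromEdgeSet (symmDiff M.edgeSet {e | e ∈ p.edges})).edgeSet
      = symmDiff M.edgeSet {e | e ∈ p.edges} := by
  rw [edgeSet_fromEdgeSet]
  apply sdiff_eq_self_iff_disjoint.mpr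
  rw [Set.disjoint_left]
  intro e hd he
  rw [Sym2.mem_diagSet] at hd
  rcases Set.mem_symmDiff.mp he with ⟨h1, -⟩ | ⟨h1, -⟩
  · exact M.not_isDiag_of_mem_edgeSet h1 hd
  · exact G.not_isDiag_of_mem_edgeSet (Walk.edges_subset_edgeSet p h1) hd

open Classical in
lemma step_aug [Fintype V] {G M : SimpleGraph V} {k : ℕ} (hk : 1 ≤ k)
    (hM : IsKLimitedSpanning G M k) {a b : V} {p : G.Walk a b} (hp : IsAugTrail G M k p) :
    ∃ M' : SimpleGraph V, IsKLimitedSpanning G M' k ∧ sigmaDef M' k < sigmaDef M k := by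
  obtain ⟨⟨ht, halt⟩, hne, hhead, hlast, hua, hub, hinner, hclosed⟩ := hp
  set M' := fromEdgeSet (symmDiff M.edgeSet {e | e ∈ p.edges}) with hM'def
  have hdeg : ∀ v, (mdeg M' v : ℤ) = mdeg M v + Dsum M p v := fun v => mdeg_aug ht v
  have halt' : AltList M p.edges := halt
  have hD : ∀ v, Dsum M p v
      = (if v = a then wt M v (p.edges.head hne) else 0)
      + (if v = b then wt M v (p.edges.getLast hne) else 0) := fun v => Dsum_eq p halt' hne v
  have hh : p.edges.head hne ∉ M.edgeSet := hhead _ (List.head?_eq_head hne)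
  have hl : p.edges.getLast hne ∉ M.edgeSet := hlast _ (List.getLast?_eq_getLast hne)
  have hw0 : ∀ (v : V) (e : Sym2 V), e ∉ M.edgeSet → 0 ≤ wt M v e := by
    intro v e hm
    by_cases h1 : v ∈ e <;> simp [wt, h1, hm]
  have hw1 : ∀ (v : V) (e : Sym2 V), wt M v e ≤ 1 := by
    intro v e
    by_cases h1 : v ∈ e <;> by_cases h2 : e ∈ M.edgeSet <;> simp [wt, h1, h2]
  have hwa : wt M a (p.edges.head hne) = 1 := by
    unfold wt; rw [if_pos (head_edge_mem p hne), if_neg hh]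
  have hwb : wt M b (p.edges.getLast hne) = 1 := by
    unfold wt; rw [if_pos (getLast_edge_mem p hne), if_neg hl]
  have hDge : ∀ v, 0 ≤ Dsum M p v := by
    intro v
    have c1 := hw0 v (p.edges.head hne) hh
    have c2 := hw0 v (p.edges.getLast hne) hl
    rw [hD v]
    split_ifs <;> linarith
  have hDa : 1 ≤ Dsum M p a := by
    have c2 := hw0 a (p.edges.getLast hne) hl
    rw [hD a, if_pos rfl, hwa]
    split_ifs <;> linarith
  have hge : ∀ v, mdeg M v ≤ mdeg M' v := by
    intro v
    have h1 := hdeg v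
    have h2 := hDge v
    omega
  have hgea : mdeg M a + 1 ≤ mdeg M' a := by
    have h1 := hdeg a
    have h2 := hDa
    omega
  have hle : ∀ v, mdeg M' v ≤ k := by
    intro v
    have h1 := hdeg v
    by_cases hva : v = a
    · subst hva
      by_cases hvb : v = b
      · -- closed trail
        have hcl := hclosed hvb
        have h2 : Dsum M p v ≤ 2 := by
          have c1 := hw1 v (p.edges.head hne)
          have c2 := hw1 v (p.edges.getLast hne)
          rw [hD v]
          split_ifs <;> linarith
        omega
      · have h2 : Dsum M p v ≤ 1 := by
          have c1 := hw1 v (p.edges.head hne)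
          rw [hD v, if_pos rfl, if_neg hvb]
          linarith
        omega
    · by_cases hvb : v = b
      · subst hvb
        have h2 : Dsum M p v ≤ 1 := by
          have c2 := hw1 v (p.edges.getLast hne)
          rw [hD v, if_neg hva, if_pos rfl]
          linarith
        have := hub
        omega
      · have h2 : Dsum M p v = 0 := by
          rw [hD v, if_neg hva, if_neg hvb, add_zero]
        have := hM.2 v
        omega
  refine ⟨M', ⟨?_, hle⟩, ?_⟩
  · intro v w hadj
    have : s(v, w) ∈ M'.edgeSet := M'.mem_edgeSet.mpr hadj
    rw [hM'def, edgeSet_aug' p] at this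
    rcases Set.mem_symmDiff.mp this with ⟨h1, -⟩ | ⟨h1, -⟩
    · exact hM.1 (M.mem_edgeSet.mp h1)
    · exact G.mem_edgeSet.mp (Walk.edges_subset_edgeSet p h1)
  · unfold sigmaDef
    apply Finset.sum_lt_sum
    · intro v _
      exact Nat.sub_le_sub_left (hge v) k
    · exact ⟨a, Finset.mem_univ a, by have := hua; omega⟩


theorem kFactor_of_augTrails [Fintype V] (G : SimpleGraph V) (k : ℕ) (hk : 1 ≤ k)
    (h : ∀ M : SimpleGraph V, IsKLimitedSpanning G M k → 0 < sigmaDef M k →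
      ∃ (a b : V) (p : G.Walk a b), IsAugTrail G M k p) :
    ∃ F : SimpleGraph V, IsKFactor G F k := by
  have factor_of_zero : ∀ M : SimpleGraph V, IsKLimitedSpanning G M k → sigmaDef M k = 0 →
      IsKFactor G M k := by
    intro M hM h0
    refine ⟨hM.1, fun v => ?_⟩
    have hv := Finset.sum_eq_zero_iff.mp h0 v (Finset.mem_univ v)
    have := hM.2 v
    omega
  have key : ∀ n (M : SimpleGraph V), IsKLimitedSpanning G M k → sigmaDef M k ≤ n →
      ∃ F : SimpleGraph V, IsKFactor G F k := by
    intro n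
    induction n with
    | zero =>
      intro M hM hle
      exact ⟨M, factor_of_zero M hM (Nat.le_zero.mp hle)⟩
    | succ n ih =>
      intro M hM hle
      by_cases h0 : sigmaDef M k = 0
      · exact ⟨M, factor_of_zero M hM h0⟩
      · obtain ⟨a, b, p, hp⟩ := h M hM (Nat.pos_of_ne_zero h0)
        obtain ⟨M', hM', hlt⟩ := step_aug hk hM hp
        exact ih M' hM' (by omega)
  refine key (sigmaDef ⊥ k) ⊥ ⟨bot_le, fun v => ?_⟩ le_rfl
  have hb : (⊥ : SimpleGraph V).neighborSet v = ∅ := by ext w; simp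
  simp [mdeg, hb]
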